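/- Let X be a connected simple graph with vertex set V, let F be a family of cuts of X, and let A be a cut belonging to the Boolean subalgebra of subsets of V generated by F (the smallest family containing F together with ∅ and V and closed under union, intersection and complement). If A separates x and y, where x, y ∈ V ∪ ΩX are each a vertex or an end of X, then some B ∈ F separates x and y. -/
import Mathlib

open Classical

/-- The set of edges of `G` with one endpoint in `A` and one in the complement of `A`. -/
def cutEdges {V : Type*} (G : SimpleGraph V) (A : Set V) : Set (Sym2 V) :=
  {e | e ∈ G.edgeSet ∧ ∃ u v, e = s(u, v) ∧ u ∈ A ∧ v ∉ A}

/-- The capacity of a cut: the sum of the capacities of the edges across it. -/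
noncomputable def cutCap {V : Type*} (G : SimpleGraph V) (c : Sym2 V → ℕ) (A : Set V) : ℕ :=
  ∑ᶠ e ∈ cutEdges G A, c e

/-- An end `ω` of `G` lies in the set `A` if the component determined by `ω` outside some
finite vertex set is contained in `A`. -/
def EndIn {V : Type*} (G : SimpleGraph V) (ω : ↥G.end) (A : Set V) : Prop :=
  ∃ K : Finset V, (ω.val (Opposite.op K)).supp ⊆ A

/-- An element of `V ∪ ΩX` (a vertex or an end) lies in `A`. -/
def LiesIn {V : Type*} (G : SimpleGraph V) (x : V ⊕ ↥G.end) (A : Set V) : Prop :=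
  match x with
  | Sum.inl v => v ∈ A
  | Sum.inr ω => EndIn G ω A

/-- A cut `A` separates `x` and `y`, each a vertex or an end. -/
def Separates {V : Type*} (G : SimpleGraph V) (A : Set V) (x y : V ⊕ ↥G.end) : Prop :=
  (LiesIn G x A ∧ LiesIn G y Aᶜ) ∨ (LiesIn G y A ∧ LiesIn G x Aᶜ)

/-- A cut: a nonempty proper subset of the vertices with finite edge boundary. -/
def IsCut {V : Type*} (G : SimpleGraph V) (A : Set V) : Prop :=
  A ≠ ∅ ∧ A ≠ Set.univ ∧ (cutEdges G A).Finite

/-- Membership in the Boolean subalgebra of `Set V` generated by a family `F`. -/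
inductive BoolGen {V : Type*} (F : Set (Set V)) : Set V → Prop
  | base {A : Set V} : A ∈ F → BoolGen F A
  | empty : BoolGen F ∅
  | univ : BoolGen F Set.univ
  | union {A B : Set V} : BoolGen F A → BoolGen F B → BoolGen F (A ∪ B)
  | inter {A B : Set V} : BoolGen F A → BoolGen F B → BoolGen F (A ∩ B)
  | compl {A : Set V} : BoolGen F A → BoolGen F Aᶜ

section Aux

open SimpleGraph Opposite

variable {V : Type*} {G : SimpleGraph V}

lemma end_supp_mono (ω : ↥G.end) {K L : Finset V} (h : K ≤ L) :
    ((ω.val (op L)).supp : Set V) ⊆ (ω.val (op K)).supp := by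
  have h2 := ω.prop (CategoryTheory.homOfLE h).op
  simp only [componentComplFunctor_map] at h2
  rw [← h2]
  exact ComponentCompl.subset_hom _ (by exact_mod_cast h)

lemma endIn_mono (ω : ↥G.end) {A B : Set V} (h : EndIn G ω A) (hAB : A ⊆ B) :
    EndIn G ω B := by
  obtain ⟨K, hK⟩ := h
  exact ⟨K, hK.trans hAB⟩

lemma endIn_inter (ω : ↥G.end) {A B : Set V} (hA : EndIn G ω A) (hB : EndIn G ω B) :
    EndIn G ω (A ∩ B) := by
  obtain ⟨K1, hK1⟩ := hA
  obtain ⟨K2, hK2⟩ := hB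
  refine ⟨K1 ∪ K2, Set.subset_inter ?_ ?_⟩
  · exact (end_supp_mono ω le_sup_left).trans hK1
  · exact (end_supp_mono ω le_sup_right).trans hK2

lemma endIn_not_both (ω : ↥G.end) {A : Set V} (hA : EndIn G ω A) (hAc : EndIn G ω Aᶜ) :
    False := by
  have := endIn_inter ω hA hAc
  obtain ⟨K, hK⟩ := this
  obtain ⟨v, hv⟩ := (ω.val (op K)).nonempty
  exact (hK hv).2 (hK hv).1

lemma endIn_or (ω : ↥G.end) {C : Set V} (hfin : (cutEdges G C).Finite) :
    EndIn G ω C ∨ EndIn G ω Cᶜ := by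
  classical
  have hKfin : ({v : V | ∃ e ∈ cutEdges G C, v ∈ e}).Finite := by
    have : {v : V | ∃ e ∈ cutEdges G C, v ∈ e} = ⋃ e ∈ cutEdges G C, {v | v ∈ e} := by
      ext v; simp
    rw [this]
    refine hfin.biUnion fun e _ => ?_
    induction e using Sym2.ind with
    | _ a b =>
      have : {v | v ∈ s(a, b)} = {a, b} := by ext v; simp [Sym2.mem_iff]
      rw [this]; exact (Set.finite_singleton a).insert b |>.insert a |>.subset (by
        intro z hz; simp at hz ⊢; tauto)
  set K : Finset V := hKfin.toFinset with hKdef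
  set D := ω.val (op K) with hD
  by_contra h
  push_neg at h
  have h1 : ¬ D.supp ⊆ C := fun hs => h.1 ⟨K, hs⟩
  have h2 : ¬ D.supp ⊆ Cᶜ := fun hs => h.2 ⟨K, hs⟩
  obtain ⟨v, hvD, hvC⟩ := Set.not_subset.mp h1
  obtain ⟨u, huD, huC⟩ := Set.not_subset.mp h2
  simp only [Set.mem_compl_iff, not_not] at huC
  obtain ⟨hu, hueq⟩ := huD
  obtain ⟨hv, hveq⟩ := hvD
  have hreach : (G.induce (↑K : Set V)ᶜ).Reachable ⟨u, hu⟩ ⟨v, hv⟩ := by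
    have := hueq.trans hveq.symm
    exact SimpleGraph.ConnectedComponent.exact this
  obtain ⟨p⟩ := hreach
  obtain ⟨d, _, hd1, hd2⟩ := p.exists_boundary_dart
    {w : ((↑K : Set V)ᶜ : Set V) | (w : V) ∈ C} huC hvC
  have hadj : G.Adj (d.fst : V) (d.snd : V) := d.adj
  have hedge : s((d.fst : V), (d.snd : V)) ∈ cutEdges G C :=
    ⟨hadj, (d.fst : V), (d.snd : V), rfl, hd1, hd2⟩
  have : (d.fst : V) ∈ {v : V | ∃ e ∈ cutEdges G C, v ∈ e} :=
    ⟨_, hedge, by simp⟩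
  exact d.toProd.1.prop (by simpa [hKdef] using this)

lemma liesIn_not_both (x : V ⊕ ↥G.end) {A : Set V} (hA : LiesIn G x A)
    (hAc : LiesIn G x Aᶜ) : False := by
  cases x with
  | inl v => exact hAc hA
  | inr ω => exact endIn_not_both ω hA hAc

lemma liesIn_or (x : V ⊕ ↥G.end) {C : Set V} (hfin : (cutEdges G C).Finite) :
    LiesIn G x C ∨ LiesIn G x Cᶜ := by
  cases x with
  | inl v => exact (Classical.em (v ∈ C)).imp id id
  | inr ω => exact endIn_or ω hfin

lemma cutEdges_compl (A : Set V) : cutEdges G Aᶜ = cutEdges G A := by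
  ext e
  constructor <;> rintro ⟨he, u, v, rfl, hu, hv⟩
  · exact ⟨he, v, u, Sym2.eq_swap, not_not.mp hv, hu⟩
  · exact ⟨he, v, u, Sym2.eq_swap, hv, fun h => h hu⟩

lemma cutEdges_union_subset (A B : Set V) :
    cutEdges G (A ∪ B) ⊆ cutEdges G A ∪ cutEdges G B := by
  rintro e ⟨he, u, v, rfl, hu, hv⟩
  rcases hu with hu | hu
  · exact Or.inl ⟨he, u, v, rfl, hu, fun h => hv (Or.inl h)⟩
  · exact Or.inr ⟨he, u, v, rfl, hu, fun h => hv (Or.inr h)⟩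

lemma cutEdges_inter_subset (A B : Set V) :
    cutEdges G (A ∩ B) ⊆ cutEdges G A ∪ cutEdges G B := by
  rintro e ⟨he, u, v, rfl, hu, hv⟩
  rcases not_and_or.mp hv with hv | hv
  · exact Or.inl ⟨he, u, v, rfl, hu.1, hv⟩
  · exact Or.inr ⟨he, u, v, rfl, hu.2, hv⟩

lemma liesIn_inter (x : V ⊕ ↥G.end) {A B : Set V} :
    LiesIn G x (A ∩ B) ↔ LiesIn G x A ∧ LiesIn G x B := by
  cases x with
  | inl v => rfl
  | inr ω =>
    constructor
    · exact fun h => ⟨endIn_mono ω h Set.inter_subset_left,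
        endIn_mono ω h Set.inter_subset_right⟩
    · exact fun ⟨h1, h2⟩ => endIn_inter ω h1 h2

lemma liesIn_compl (x : V ⊕ ↥G.end) {A : Set V} (hfin : (cutEdges G A).Finite) :
    LiesIn G x Aᶜ ↔ ¬ LiesIn G x A := by
  constructor
  · exact fun h h' => liesIn_not_both x h' h
  · intro h
    rcases liesIn_or x hfin with h' | h'
    · exact absurd h' h
    · exact h'

lemma liesIn_union (x : V ⊕ ↥G.end) {A B : Set V} (hA : (cutEdges G A).Finite)
    (hB : (cutEdges G B).Finite) :
    LiesIn G x (A ∪ B) ↔ LiesIn G x A ∨ LiesIn G x B := by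
  cases x with
  | inl v => rfl
  | inr ω =>
    constructor
    · intro h
      by_contra hc
      push_neg at hc
      have h1 : EndIn G ω Aᶜ := (liesIn_compl (Sum.inr ω) hA).mpr hc.1
      have h2 : EndIn G ω Bᶜ := (liesIn_compl (Sum.inr ω) hB).mpr hc.2
      have := endIn_inter ω h1 h2
      rw [← Set.compl_union] at this
      exact endIn_not_both ω h this
    · rintro (h | h)
      · exact endIn_mono ω h Set.subset_union_left
      · exact endIn_mono ω h Set.subset_union_right

lemma cutEdges_empty : cutEdges G (∅ : Set V) = ∅ := by
  ext e; simp [cutEdges]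

lemma cutEdges_univ : cutEdges G (Set.univ : Set V) = ∅ := by
  ext e; simp [cutEdges]

lemma liesIn_empty (x : V ⊕ ↥G.end) : ¬ LiesIn G x (∅ : Set V) := by
  cases x with
  | inl v => exact id
  | inr ω =>
    rintro ⟨K, hK⟩
    obtain ⟨v, hv⟩ := (ω.val (op K)).nonempty
    exact hK hv

lemma liesIn_univ (x : V ⊕ ↥G.end) : LiesIn G x (Set.univ : Set V) := by
  cases x with
  | inl v => trivial
  | inr ω => exact ⟨∅, Set.subset_univ _⟩

end Aux

/-- If a cut `A` in the Boolean subalgebra generated by a family `F` of cuts separates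
`x` and `y` (each a vertex or an end), then some `B ∈ F` separates `x` and `y`. -/
theorem separation_from_generators {V : Type*} (G : SimpleGraph V) (hG : G.Connected)
    (F : Set (Set V)) (hF : ∀ B ∈ F, IsCut G B)
    (A : Set V) (hAcut : IsCut G A) (hAgen : BoolGen F A)
    (x y : V ⊕ ↥G.end) (hsep : Separates G A x y) :
    ∃ B ∈ F, Separates G B x y := by
  by_contra hno
  push_neg at hno
  have key : ∀ C : Set V, BoolGen F C →
      (cutEdges G C).Finite ∧ (LiesIn G x C ↔ LiesIn G y C) := by
    intro C hC
    induction hC with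
    | @base B hB =>
      have hfin := (hF B hB).2.2
      refine ⟨hfin, ?_⟩
      have hn := hno B hB
      rw [Separates] at hn
      have hxor := liesIn_or x hfin
      have hyor := liesIn_or y hfin
      have hnx : ¬ (LiesIn G x B ∧ LiesIn G x Bᶜ) := fun ⟨h, h'⟩ => liesIn_not_both x h h'
      have hny : ¬ (LiesIn G y B ∧ LiesIn G y Bᶜ) := fun ⟨h, h'⟩ => liesIn_not_both y h h'
      tauto
    | empty =>
      exact ⟨by rw [cutEdges_empty]; exact Set.finite_empty,
        by simp [liesIn_empty x, liesIn_empty y]⟩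
    | univ =>
      exact ⟨by rw [cutEdges_univ]; exact Set.finite_empty,
        by simp [liesIn_univ x, liesIn_univ y]⟩
    | @union A B _ _ ihA ihB =>
      refine ⟨((ihA.1.union ihB.1).subset (cutEdges_union_subset A B)), ?_⟩
      rw [liesIn_union x ihA.1 ihB.1, liesIn_union y ihA.1 ihB.1, ihA.2, ihB.2]
    | @inter A B _ _ ihA ihB =>
      refine ⟨((ihA.1.union ihB.1).subset (cutEdges_inter_subset A B)), ?_⟩
      rw [liesIn_inter x, liesIn_inter y, ihA.2, ihB.2]
    | @compl A _ ihA =>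
      refine ⟨by rw [cutEdges_compl]; exact ihA.1, ?_⟩
      rw [liesIn_compl x ihA.1, liesIn_compl y ihA.1, ihA.2]
  obtain ⟨-, hiff⟩ := key A hAgen
  rcases hsep with ⟨hxA, hyAc⟩ | ⟨hyA, hxAc⟩
  · exact liesIn_not_both y (hiff.mp hxA) hyAc
  · exact liesIn_not_both x (hiff.mpr hyA) hxAc
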